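/- If G is a graph of order n with δ_h ≥ 1 whose graph Dist(G;2) has no isolated vertex, then γ_{2sr}(G) ≤ ((2 ln(δ_h + 1) + δ_h + 3)/(δ_h + 1)) · n − 2ν_h(G). -/

import Mathlib

open Finset

noncomputable section
open scoped Classical

variable {n : ℕ}

/-- The set of vertices at distance exactly 2 from `i`. -/
def N2 (G : SimpleGraph (Fin n)) (i : Fin n) : Finset (Fin n) :=
  Finset.univ.filter (fun j => G.dist i j = 2)

/-- The neighborhood of `i`. -/
def Nbr (G : SimpleGraph (Fin n)) (i : Fin n) : Finset (Fin n) :=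
  Finset.univ.filter (fun j => G.Adj i j)

/-- Hop degree of a vertex. -/
def hopDeg (G : SimpleGraph (Fin n)) (i : Fin n) : ℕ := (N2 G i).card

/-- Minimum hop degree. -/
def minHopDeg (G : SimpleGraph (Fin n)) : ℕ := ⨅ i, hopDeg G i

/-- Minimum degree. -/
def minDeg (G : SimpleGraph (Fin n)) : ℕ := ⨅ i, (Nbr G i).card

def IsHopDomSet (G : SimpleGraph (Fin n)) (S : Finset (Fin n)) : Prop :=
  ∀ u, u ∉ S → ∃ v ∈ S, G.dist u v = 2

def IsTwoStepDomSet (G : SimpleGraph (Fin n)) (S : Finset (Fin n)) : Prop :=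
  ∀ u : Fin n, ∃ v ∈ S, G.dist u v = 2

def IsRestrainedHopDomSet (G : SimpleGraph (Fin n)) (S : Finset (Fin n)) : Prop :=
  IsHopDomSet G S ∧ ∀ u, u ∉ S → ∃ v, v ∉ S ∧ G.Adj u v

def IsTotalRestrainedHopDomSet (G : SimpleGraph (Fin n)) (S : Finset (Fin n)) : Prop :=
  IsTwoStepDomSet G S ∧ ∀ u, u ∉ S → ∃ v, v ∉ S ∧ G.Adj u v

def IsTwoStepRestrainedDomSet (G : SimpleGraph (Fin n)) (S : Finset (Fin n)) : Prop :=
  IsHopDomSet G S ∧ ∀ u, u ∉ S → ∃ v, v ∉ S ∧ G.dist u v = 2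

def IsTotalTwoStepRestrainedDomSet (G : SimpleGraph (Fin n)) (S : Finset (Fin n)) : Prop :=
  IsTwoStepDomSet G S ∧ ∀ u, u ∉ S → ∃ v, v ∉ S ∧ G.dist u v = 2

def hopDomNum (G : SimpleGraph (Fin n)) : ℕ :=
  sInf {k | ∃ S : Finset (Fin n), IsHopDomSet G S ∧ S.card = k}

def twoStepDomNum (G : SimpleGraph (Fin n)) : ℕ :=
  sInf {k | ∃ S : Finset (Fin n), IsTwoStepDomSet G S ∧ S.card = k}

def rhDomNum (G : SimpleGraph (Fin n)) : ℕ :=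
  sInf {k | ∃ S : Finset (Fin n), IsRestrainedHopDomSet G S ∧ S.card = k}

def trhDomNum (G : SimpleGraph (Fin n)) : ℕ :=
  sInf {k | ∃ S : Finset (Fin n), IsTotalRestrainedHopDomSet G S ∧ S.card = k}

def tsrDomNum (G : SimpleGraph (Fin n)) : ℕ :=
  sInf {k | ∃ S : Finset (Fin n), IsTwoStepRestrainedDomSet G S ∧ S.card = k}

def ttsrDomNum (G : SimpleGraph (Fin n)) : ℕ :=
  sInf {k | ∃ S : Finset (Fin n), IsTotalTwoStepRestrainedDomSet G S ∧ S.card = k}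

/-- The graph `Dist(G;2)` joining vertices at distance exactly 2 in `G`. -/
def dist2Graph (G : SimpleGraph (Fin n)) : SimpleGraph (Fin n) where
  Adj u v := u ≠ v ∧ G.dist u v = 2
  symm := by
    constructor
    intro u v h
    exact ⟨h.1.symm, by rw [SimpleGraph.dist_comm]; exact h.2⟩
  loopless := ⟨fun v h => h.1 rfl⟩

def domNum (H : SimpleGraph (Fin n)) : ℕ :=
  sInf {k | ∃ S : Finset (Fin n), (∀ u, u ∉ S → ∃ v ∈ S, H.Adj u v) ∧ S.card = k}

def totalDomNum (H : SimpleGraph (Fin n)) : ℕ :=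
  sInf {k | ∃ S : Finset (Fin n), (∀ u : Fin n, ∃ v ∈ S, H.Adj u v) ∧ S.card = k}

/-- Matching number: maximum number of edges in a matching. -/
def matchingNum (G : SimpleGraph (Fin n)) : ℕ :=
  sSup {k | ∃ M : SimpleGraph.Subgraph G, M.IsMatching ∧ M.edgeSet.ncard = k}

/-- A hop matching: a set of paths of length two, no two of which share an end vertex. -/
def IsHopMatching (G : SimpleGraph (Fin n)) (H : Finset (Fin n × Fin n × Fin n)) : Prop :=
  (∀ t ∈ H, G.Adj t.1 t.2.1 ∧ G.Adj t.2.1 t.2.2 ∧ t.1 ≠ t.2.2) ∧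
  ∀ t ∈ H, ∀ t' ∈ H, t ≠ t' →
    t.1 ≠ t'.1 ∧ t.1 ≠ t'.2.2 ∧ t.2.2 ≠ t'.1 ∧ t.2.2 ≠ t'.2.2

/-- Hop matching number. -/
def hopMatchingNum (G : SimpleGraph (Fin n)) : ℕ :=
  sSup {k | ∃ H : Finset (Fin n × Fin n × Fin n), IsHopMatching G H ∧ H.card = k}

def frh (G : SimpleGraph (Fin n)) (p : Fin n → ℝ) : ℝ :=
  (∑ i, p i) + (∑ i, (1 - p i) * ∏ j ∈ N2 G i, (1 - p j)) +
  ∑ i, (1 - p i) * (1 - (1 - p i) * ∏ j ∈ N2 G i, (1 - p j)) *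
    ∏ j ∈ Nbr G i, (p j + (1 - p j) * ∏ k ∈ N2 G j, (1 - p k))

def f2sr (G : SimpleGraph (Fin n)) (p : Fin n → ℝ) : ℝ :=
  (∑ i, p i) + (∑ i, (1 - p i) * ∏ j ∈ N2 G i, (1 - p j)) +
  ∑ i, (1 - p i) * (1 - (1 - p i) * ∏ j ∈ N2 G i, (1 - p j)) *
    ∏ j ∈ N2 G i, (p j + (1 - p j) * ∏ k ∈ N2 G j, (1 - p k))

def ZSet (G : SimpleGraph (Fin n)) (X : Finset (Fin n)) : Finset (Fin n) :=
  Finset.univ.filter (fun i => i ∉ X ∧ N2 G i ∩ X = ∅)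

def YSet (G : SimpleGraph (Fin n)) (X : Finset (Fin n)) : Finset (Fin n) :=
  Finset.univ.filter (fun i => i ∉ X ∪ ZSet G X ∧ Nbr G i ⊆ X ∪ ZSet G X)

def DSet (G : SimpleGraph (Fin n)) (X : Finset (Fin n)) : Finset (Fin n) :=
  X ∪ ZSet G X ∪ YSet G X


/-! ### Auxiliary material for the proof -/

/-- The set of vertices outside `X ∪ ZSet G X` all of whose distance-2 neighbours are
in `X ∪ ZSet G X`. -/
def Y2Set (G : SimpleGraph (Fin n)) (X : Finset (Fin n)) : Finset (Fin n) :=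
  Finset.univ.filter (fun i => i ∉ X ∪ ZSet G X ∧ N2 G i ⊆ X ∪ ZSet G X)

def TSRSet (G : SimpleGraph (Fin n)) (X : Finset (Fin n)) : Finset (Fin n) :=
  X ∪ ZSet G X ∪ Y2Set G X

lemma mem_N2_symm {G : SimpleGraph (Fin n)} {u v : Fin n} (h : v ∈ N2 G u) : u ∈ N2 G v := by
  simp only [N2, Finset.mem_filter, Finset.mem_univ, true_and] at *
  rwa [SimpleGraph.dist_comm]

lemma mem_TSRSet {G : SimpleGraph (Fin n)} {X : Finset (Fin n)} {u : Fin n} :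
    u ∈ TSRSet G X ↔ u ∈ X ∨ u ∈ ZSet G X ∨ u ∈ Y2Set G X := by
  simp only [TSRSet, Finset.mem_union]
  tauto

lemma TSRSet_is2sr (G : SimpleGraph (Fin n)) (X : Finset (Fin n)) :
    IsTwoStepRestrainedDomSet G (TSRSet G X) := by
  constructor
  · intro u hu
    rw [mem_TSRSet] at hu
    push_neg at hu
    obtain ⟨huX, huZ, huY⟩ := hu
    have : ¬ (N2 G u ∩ X = ∅) := by
      intro h
      exact huZ (Finset.mem_filter.2 ⟨Finset.mem_univ _, huX, h⟩)
    obtain ⟨v, hv⟩ := Finset.nonempty_iff_ne_empty.2 this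
    rw [Finset.mem_inter] at hv
    refine ⟨v, mem_TSRSet.2 (Or.inl hv.2), ?_⟩
    simpa [N2, Finset.mem_filter] using hv.1
  · intro u hu
    rw [mem_TSRSet] at hu
    push_neg at hu
    obtain ⟨huX, huZ, huY⟩ := hu
    have huXZ : u ∉ X ∪ ZSet G X := by
      rw [Finset.mem_union]; tauto
    have : ¬ (N2 G u ⊆ X ∪ ZSet G X) := by
      intro h
      exact huY (Finset.mem_filter.2 ⟨Finset.mem_univ _, huXZ, h⟩)
    obtain ⟨w, hwN, hwXZ⟩ := Finset.not_subset.1 this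
    refine ⟨w, ?_, by simpa [N2, Finset.mem_filter] using hwN⟩
    intro hwS
    rcases mem_TSRSet.1 hwS with (h | h | h)
    · exact hwXZ (Finset.mem_union_left _ h)
    · exact hwXZ (Finset.mem_union_right _ h)
    · have := (Finset.mem_filter.1 h).2.2 (mem_N2_symm hwN)
      exact huXZ this

lemma tsr_le_TSRSet (G : SimpleGraph (Fin n)) (X : Finset (Fin n)) :
    tsrDomNum G ≤ (TSRSet G X).card :=
  Nat.sInf_le ⟨TSRSet G X, TSRSet_is2sr G X, rfl⟩

/-- product-form weight of a subset. -/
def wgt (p : ℝ) (X : Finset (Fin n)) : ℝ :=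
  (∏ _i ∈ X, p) * ∏ _i ∈ Finset.univ \ X, (1 - p)

lemma wgt_nonneg {p : ℝ} (hp0 : 0 ≤ p) (hp1 : p ≤ 1) (X : Finset (Fin n)) : 0 ≤ wgt p X :=
  mul_nonneg (Finset.prod_nonneg fun _ _ => hp0)
    (Finset.prod_nonneg fun _ _ => by linarith)

lemma wgt_indicator_sum (p : ℝ) (A : Finset (Fin n)) :
    ∑ X ∈ (Finset.univ : Finset (Fin n)).powerset, wgt p X * (if X ∩ A = ∅ then 1 else 0)
      = (1 - p) ^ A.card := by
  classical
  have key : ∀ X ∈ (Finset.univ : Finset (Fin n)).powerset,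
      wgt p X * (if X ∩ A = ∅ then 1 else 0)
        = (∏ i ∈ X, (if i ∈ A then (0:ℝ) else p)) * ∏ _i ∈ Finset.univ \ X, (1 - p) := by
    intro X _
    by_cases h : X ∩ A = ∅
    · have : ∀ i ∈ X, (if i ∈ A then (0:ℝ) else p) = p := by
        intro i hi
        have : i ∉ A := fun hA => by
          have : i ∈ X ∩ A := Finset.mem_inter.2 ⟨hi, hA⟩
          simp [h] at this
        simp [this]
      rw [Finset.prod_congr rfl this]
      simp [wgt, h]
    · obtain ⟨i, hi⟩ := Finset.nonempty_iff_ne_empty.2 h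
      rw [Finset.mem_inter] at hi
      have : (∏ i ∈ X, (if i ∈ A then (0:ℝ) else p)) = 0 :=
        Finset.prod_eq_zero hi.1 (by simp [hi.2])
      simp [h, this]
  rw [Finset.sum_congr rfl key, ← Finset.prod_add (fun i => if i ∈ A then (0:ℝ) else p)
    (fun _ => 1 - p) Finset.univ]
  have : ∀ i ∈ (Finset.univ : Finset (Fin n)),
      ((if i ∈ A then (0:ℝ) else p) + (1 - p)) = (if i ∈ A then (1-p) else 1) := by
    intro i _
    by_cases h : i ∈ A <;> simp [h]
  rw [Finset.prod_congr rfl this]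
  rw [Finset.prod_ite_mem Finset.univ A (fun _ => (1-p)), Finset.univ_inter,
    Finset.prod_const]

lemma wgt_total (p : ℝ) :
    ∑ X ∈ (Finset.univ : Finset (Fin n)).powerset, wgt p X = 1 := by
  have := wgt_indicator_sum (n := n) p ∅
  simpa using this

lemma wgt_mem_sum (p : ℝ) (i : Fin n) :
    ∑ X ∈ (Finset.univ : Finset (Fin n)).powerset, wgt p X * (if i ∈ X then 1 else 0) = p := by
  have h1 : ∀ X ∈ (Finset.univ : Finset (Fin n)).powerset,
      wgt p X * (if i ∈ X then 1 else 0)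
        = wgt p X - wgt p X * (if X ∩ {i} = ∅ then 1 else 0) := by
    intro X _
    by_cases h : i ∈ X
    · have : ¬ (X ∩ {i} = ∅) := by
        intro he
        have : i ∈ X ∩ {i} := Finset.mem_inter.2 ⟨h, Finset.mem_singleton_self i⟩
        simp [he] at this
      simp [h, this]
    · have : X ∩ {i} = ∅ := by
        ext j; simp only [Finset.mem_inter, Finset.mem_singleton, Finset.notMem_empty,
          iff_false, not_and]
        rintro hj rfl; exact h hj
      simp [h, this]
  rw [Finset.sum_congr rfl h1, Finset.sum_sub_distrib, wgt_total, wgt_indicator_sum]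
  simp

lemma hopDeg_pos {G : SimpleGraph (Fin n)} (hδ : 1 ≤ minHopDeg G) (i : Fin n) :
    1 ≤ hopDeg G i := by
  have : minHopDeg G ≤ hopDeg G i := ciInf_le (OrderBot.bddBelow _) i
  omega

lemma mem_ZSet_iff {G : SimpleGraph (Fin n)} {X : Finset (Fin n)} {i : Fin n} :
    i ∈ ZSet G X ↔ X ∩ insert i (N2 G i) = ∅ := by
  simp only [ZSet, Finset.mem_filter, Finset.mem_univ, true_and]
  constructor
  · rintro ⟨h1, h2⟩
    ext j
    simp only [Finset.mem_inter, Finset.mem_insert, Finset.notMem_empty, iff_false, not_and]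
    rintro hj (rfl | hjN)
    · exact h1 hj
    · have : j ∈ N2 G i ∩ X := Finset.mem_inter.2 ⟨hjN, hj⟩
      simp [h2] at this
  · intro h
    constructor
    · intro hi
      have : i ∈ X ∩ insert i (N2 G i) := Finset.mem_inter.2 ⟨hi, Finset.mem_insert_self _ _⟩
      simp [h] at this
    · ext j
      simp only [Finset.mem_inter, Finset.notMem_empty, iff_false, not_and]
      intro hjN hjX
      have : j ∈ X ∩ insert i (N2 G i) :=
        Finset.mem_inter.2 ⟨hjX, Finset.mem_insert_of_mem hjN⟩
      simp [h] at this

lemma self_not_mem_N2 (G : SimpleGraph (Fin n)) (i : Fin n) : i ∉ N2 G i := by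
  simp [N2, SimpleGraph.dist_self]

lemma wgt_ZSet_sum (p : ℝ) (G : SimpleGraph (Fin n)) (i : Fin n) :
    ∑ X ∈ (Finset.univ : Finset (Fin n)).powerset, wgt p X * (if i ∈ ZSet G X then 1 else 0)
      = (1 - p) ^ (hopDeg G i + 1) := by
  have h1 : ∀ X ∈ (Finset.univ : Finset (Fin n)).powerset,
      wgt p X * (if i ∈ ZSet G X then 1 else 0)
        = wgt p X * (if X ∩ insert i (N2 G i) = ∅ then 1 else 0) := by
    intro X _
    by_cases h : i ∈ ZSet G X
    · simp [h, mem_ZSet_iff.1 h]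
    · have : ¬ (X ∩ insert i (N2 G i) = ∅) := fun hc => h (mem_ZSet_iff.2 hc)
      simp [h, this]
  rw [Finset.sum_congr rfl h1, wgt_indicator_sum,
    Finset.card_insert_of_notMem (self_not_mem_N2 G i)]
  rfl

lemma wgt_XZ_sum (p : ℝ) (G : SimpleGraph (Fin n)) (j : Fin n) :
    ∑ X ∈ (Finset.univ : Finset (Fin n)).powerset, wgt p X * (if j ∈ X ∪ ZSet G X then 1 else 0)
      = p + (1 - p) ^ (hopDeg G j + 1) := by
  have h1 : ∀ X ∈ (Finset.univ : Finset (Fin n)).powerset,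
      wgt p X * (if j ∈ X ∪ ZSet G X then 1 else 0)
        = wgt p X * (if j ∈ X then 1 else 0) + wgt p X * (if j ∈ ZSet G X then 1 else 0) := by
    intro X _
    by_cases hX : j ∈ X
    · have hZ : j ∉ ZSet G X := by
        intro h
        have := mem_ZSet_iff.1 h
        have : j ∈ X ∩ insert j (N2 G j) := Finset.mem_inter.2 ⟨hX, Finset.mem_insert_self _ _⟩
        rw [mem_ZSet_iff.1 h] at this
        simp at this
      simp [hX, hZ, Finset.mem_union]
    · by_cases hZ : j ∈ ZSet G X <;>
        simp [hX, hZ, Finset.mem_union]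
  rw [Finset.sum_congr rfl h1, Finset.sum_add_distrib, wgt_mem_sum, wgt_ZSet_sum]

lemma card_as_indicator (T : Finset (Fin n)) :
    (T.card : ℝ) = ∑ i : Fin n, (if i ∈ T then 1 else 0) := by
  rw [Finset.sum_boole]
  congr 1
  simp [Finset.filter_mem_eq_inter]

/-- The key probabilistic bound. -/
lemma tsr_prob_bound (G : SimpleGraph (Fin n)) (hδ : 1 ≤ minHopDeg G)
    {p : ℝ} (hp0 : 0 ≤ p) (hp1 : p ≤ 1) :
    (tsrDomNum G : ℝ) ≤ 2 * n * p + 2 * n * (1 - p) ^ (minHopDeg G + 1) := by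
  classical
  set δ := minHopDeg G with hδdef
  -- choose a distance-2 neighbour for every vertex
  have hne : ∀ i : Fin n, (N2 G i).Nonempty := by
    intro i
    rw [← Finset.card_pos]
    exact hopDeg_pos hδ i
  set jf : Fin n → Fin n := fun i => (hne i).choose with hjf
  have hjmem : ∀ i, jf i ∈ N2 G i := fun i => (hne i).choose_spec
  have hq0 : (0:ℝ) ≤ 1 - p := by linarith
  have hq1 : (1:ℝ) - p ≤ 1 := by linarith
  have hpow : ∀ i : Fin n, (1 - p) ^ (hopDeg G i + 1) ≤ (1 - p) ^ (δ + 1) := by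
    intro i
    apply pow_le_pow_of_le_one hq0 hq1
    have := hopDeg_pos hδ i
    have h2 : δ ≤ hopDeg G i := ciInf_le (OrderBot.bddBelow _) i
    omega
  -- Y2 cardinality pointwise bound
  have hY2 : ∀ X : Finset (Fin n), ((Y2Set G X).card : ℝ)
      ≤ ∑ i : Fin n, (if jf i ∈ X ∪ ZSet G X then 1 else 0) := by
    intro X
    rw [Finset.sum_boole]
    have : Y2Set G X ⊆ Finset.univ.filter (fun i => jf i ∈ X ∪ ZSet G X) := by
      intro i hi
      rw [Y2Set, Finset.mem_filter] at hi
      exact Finset.mem_filter.2 ⟨Finset.mem_univ _, hi.2.2 (hjmem i)⟩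
    exact_mod_cast Finset.card_le_card this
  -- expectation bound
  have hmain : (tsrDomNum G : ℝ)
      ≤ ∑ X ∈ (Finset.univ : Finset (Fin n)).powerset, wgt p X * ((TSRSet G X).card : ℝ) := by
    calc (tsrDomNum G : ℝ)
        = ∑ X ∈ (Finset.univ : Finset (Fin n)).powerset, wgt p X * (tsrDomNum G : ℝ) := by
          rw [← Finset.sum_mul, wgt_total (n := n) p, one_mul]
      _ ≤ ∑ X ∈ (Finset.univ : Finset (Fin n)).powerset, wgt p X * ((TSRSet G X).card : ℝ) := by
          apply Finset.sum_le_sum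
          intro X _
          apply mul_le_mul_of_nonneg_left _ (wgt_nonneg hp0 hp1 X)
          exact_mod_cast tsr_le_TSRSet G X
  have hcard : ∀ X : Finset (Fin n), ((TSRSet G X).card : ℝ)
      ≤ (X.card : ℝ) + ((ZSet G X).card : ℝ) + ((Y2Set G X).card : ℝ) := by
    intro X
    have h1 : (TSRSet G X).card ≤ X.card + (ZSet G X).card + (Y2Set G X).card := by
      calc (TSRSet G X).card ≤ (X ∪ ZSet G X).card + (Y2Set G X).card :=
            Finset.card_union_le _ _
        _ ≤ X.card + (ZSet G X).card + (Y2Set G X).card := by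
            have := Finset.card_union_le X (ZSet G X)
            omega
    exact_mod_cast h1
  have step2 : (tsrDomNum G : ℝ)
      ≤ ∑ X ∈ (Finset.univ : Finset (Fin n)).powerset, wgt p X *
        ((X.card : ℝ) + ((ZSet G X).card : ℝ) +
          ∑ i : Fin n, (if jf i ∈ X ∪ ZSet G X then 1 else 0)) := by
    refine hmain.trans (Finset.sum_le_sum fun X _ => ?_)
    apply mul_le_mul_of_nonneg_left _ (wgt_nonneg hp0 hp1 X)
    have := hcard X
    have := hY2 X
    linarith
  -- expand and evaluate
  have expand : ∑ X ∈ (Finset.univ : Finset (Fin n)).powerset, wgt p X *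
        ((X.card : ℝ) + ((ZSet G X).card : ℝ) +
          ∑ i : Fin n, (if jf i ∈ X ∪ ZSet G X then 1 else 0))
      = (∑ i : Fin n, p) + (∑ i : Fin n, (1-p) ^ (hopDeg G i + 1))
        + ∑ i : Fin n, (p + (1-p) ^ (hopDeg G (jf i) + 1)) := by
    have e1 : ∑ X ∈ (Finset.univ : Finset (Fin n)).powerset, wgt p X * (X.card : ℝ)
        = ∑ i : Fin n, p := by
      calc ∑ X ∈ (Finset.univ : Finset (Fin n)).powerset, wgt p X * (X.card : ℝ)
          = ∑ X ∈ (Finset.univ : Finset (Fin n)).powerset, ∑ i : Fin n,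
              wgt p X * (if i ∈ X then 1 else 0) := by
            refine Finset.sum_congr rfl fun X _ => ?_
            rw [card_as_indicator, Finset.mul_sum]
        _ = ∑ i : Fin n, ∑ X ∈ (Finset.univ : Finset (Fin n)).powerset,
              wgt p X * (if i ∈ X then 1 else 0) := Finset.sum_comm
        _ = ∑ i : Fin n, p := by
            exact Finset.sum_congr rfl fun i _ => wgt_mem_sum p i
    have e2 : ∑ X ∈ (Finset.univ : Finset (Fin n)).powerset, wgt p X * ((ZSet G X).card : ℝ)
        = ∑ i : Fin n, (1-p) ^ (hopDeg G i + 1) := by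
      calc ∑ X ∈ (Finset.univ : Finset (Fin n)).powerset, wgt p X * ((ZSet G X).card : ℝ)
          = ∑ X ∈ (Finset.univ : Finset (Fin n)).powerset, ∑ i : Fin n,
              wgt p X * (if i ∈ ZSet G X then 1 else 0) := by
            refine Finset.sum_congr rfl fun X _ => ?_
            rw [card_as_indicator, Finset.mul_sum]
        _ = ∑ i : Fin n, ∑ X ∈ (Finset.univ : Finset (Fin n)).powerset,
              wgt p X * (if i ∈ ZSet G X then 1 else 0) := Finset.sum_comm
        _ = ∑ i : Fin n, (1-p) ^ (hopDeg G i + 1) :=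
            Finset.sum_congr rfl fun i _ => wgt_ZSet_sum p G i
    have e3 : ∑ X ∈ (Finset.univ : Finset (Fin n)).powerset, wgt p X *
          (∑ i : Fin n, (if jf i ∈ X ∪ ZSet G X then 1 else 0))
        = ∑ i : Fin n, (p + (1-p) ^ (hopDeg G (jf i) + 1)) := by
      calc ∑ X ∈ (Finset.univ : Finset (Fin n)).powerset, wgt p X *
            (∑ i : Fin n, (if jf i ∈ X ∪ ZSet G X then 1 else 0))
          = ∑ X ∈ (Finset.univ : Finset (Fin n)).powerset, ∑ i : Fin n,
              wgt p X * (if jf i ∈ X ∪ ZSet G X then 1 else 0) := by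
            exact Finset.sum_congr rfl fun X _ => Finset.mul_sum _ _ _
        _ = ∑ i : Fin n, ∑ X ∈ (Finset.univ : Finset (Fin n)).powerset,
              wgt p X * (if jf i ∈ X ∪ ZSet G X then 1 else 0) := Finset.sum_comm
        _ = ∑ i : Fin n, (p + (1-p) ^ (hopDeg G (jf i) + 1)) :=
            Finset.sum_congr rfl fun i _ => wgt_XZ_sum p G (jf i)
    calc ∑ X ∈ (Finset.univ : Finset (Fin n)).powerset, wgt p X *
          ((X.card : ℝ) + ((ZSet G X).card : ℝ) +
            ∑ i : Fin n, (if jf i ∈ X ∪ ZSet G X then 1 else 0))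
        = (∑ X ∈ (Finset.univ : Finset (Fin n)).powerset, wgt p X * (X.card : ℝ))
          + (∑ X ∈ (Finset.univ : Finset (Fin n)).powerset, wgt p X * ((ZSet G X).card : ℝ))
          + ∑ X ∈ (Finset.univ : Finset (Fin n)).powerset, wgt p X *
              (∑ i : Fin n, (if jf i ∈ X ∪ ZSet G X then 1 else 0)) := by
          rw [← Finset.sum_add_distrib, ← Finset.sum_add_distrib]
          exact Finset.sum_congr rfl fun X _ => by ring
      _ = _ := by rw [e1, e2, e3]
  rw [expand] at step2
  have final : (∑ i : Fin n, p) + (∑ i : Fin n, (1-p) ^ (hopDeg G i + 1))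
        + ∑ i : Fin n, (p + (1-p) ^ (hopDeg G (jf i) + 1))
      ≤ 2 * n * p + 2 * n * (1 - p) ^ (δ + 1) := by
    have b1 : (∑ i : Fin n, p) = n * p := by
      rw [Finset.sum_const, Finset.card_univ, Fintype.card_fin, nsmul_eq_mul]
    have b2 : (∑ i : Fin n, (1-p) ^ (hopDeg G i + 1)) ≤ n * (1-p)^(δ+1) := by
      calc (∑ i : Fin n, (1-p) ^ (hopDeg G i + 1))
          ≤ ∑ i : Fin n, (1-p)^(δ+1) := Finset.sum_le_sum fun i _ => hpow i
        _ = n * (1-p)^(δ+1) := by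
            rw [Finset.sum_const, Finset.card_univ, Fintype.card_fin, nsmul_eq_mul]
    have b3 : (∑ i : Fin n, (p + (1-p) ^ (hopDeg G (jf i) + 1)))
        ≤ n * p + n * (1-p)^(δ+1) := by
      calc (∑ i : Fin n, (p + (1-p) ^ (hopDeg G (jf i) + 1)))
          ≤ ∑ i : Fin n, (p + (1-p)^(δ+1)) :=
            Finset.sum_le_sum fun i _ => by have := hpow (jf i); linarith
        _ = n * (p + (1-p)^(δ+1)) := by
            rw [Finset.sum_const, Finset.card_univ, Fintype.card_fin, nsmul_eq_mul]
        _ = n * p + n * (1-p)^(δ+1) := by ring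
    linarith
  linarith

/-- Twice the hop matching number is at most `n`. -/
lemma two_hopMatchingNum_le (G : SimpleGraph (Fin n)) :
    2 * hopMatchingNum G ≤ n := by
  classical
  have hbdd : ∀ k ∈ {k | ∃ H : Finset (Fin n × Fin n × Fin n), IsHopMatching G H ∧ H.card = k},
      k ≤ n / 2 := by
    rintro k ⟨H, hH, rfl⟩
    rw [Nat.le_div_iff_mul_le (by norm_num)]
    -- the map sending (t, b) to an end of t is injective on H ×ˢ univ
    have hinj : Set.InjOn (fun tb : (Fin n × Fin n × Fin n) × Bool =>
        if tb.2 then tb.1.1 else tb.1.2.2) ↑(H ×ˢ (Finset.univ : Finset Bool)) := by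
      rintro ⟨t, b⟩ htb ⟨t', b'⟩ htb' heq
      simp only [Finset.coe_product, Set.mem_prod, Finset.mem_coe] at htb htb'
      simp only at heq
      by_cases hts : t = t'
      · subst hts
        by_cases hb : b = b'
        · simp [hb]
        · exfalso
          have hne := (hH.1 t htb.1).2.2
          rcases Bool.eq_false_or_eq_true b with rfl | rfl <;>
            rcases Bool.eq_false_or_eq_true b' with rfl | rfl <;>
              simp_all
      · exfalso
        have h4 := hH.2 t htb.1 t' htb'.1 hts
        rcases Bool.eq_false_or_eq_true b with rfl | rfl <;>
          rcases Bool.eq_false_or_eq_true b' with rfl | rfl <;>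
            simp at heq <;> tauto
    have := Finset.card_le_card_of_injOn _ (fun _ _ => Finset.mem_univ _) hinj
    rw [Finset.card_product] at this
    simpa [mul_comm, Finset.card_univ] using this
  have hne : ({k | ∃ H : Finset (Fin n × Fin n × Fin n), IsHopMatching G H ∧ H.card = k}
      : Set ℕ).Nonempty :=
    ⟨0, ∅, ⟨fun t ht => absurd ht (Finset.notMem_empty t),
      fun t ht _ _ _ => absurd ht (Finset.notMem_empty t)⟩, Finset.card_empty⟩
  have : hopMatchingNum G ≤ n / 2 := csSup_le hne hbdd
  omega

theorem stmt12 {n : ℕ} (G : SimpleGraph (Fin n)) (hδh : 1 ≤ minHopDeg G)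
    (hiso : ∀ v : Fin n, ∃ u, (dist2Graph G).Adj v u) :
    (tsrDomNum G : ℝ) ≤
      (2 * Real.log (minHopDeg G + 1) + minHopDeg G + 3) / (minHopDeg G + 1) * n
        - 2 * hopMatchingNum G := by
  classical
  set δ := minHopDeg G with hδdef
  set L := Real.log (δ + 1) with hLdef
  have hδ1 : (1:ℝ) ≤ (δ:ℝ) := by exact_mod_cast hδh
  have hpos : (0:ℝ) < (δ:ℝ) + 1 := by linarith
  have hne0 : ((δ:ℝ) + 1) ≠ 0 := ne_of_gt hpos
  set p := L / ((δ:ℝ) + 1) with hpdef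
  have hL0 : 0 ≤ L := Real.log_nonneg (by linarith)
  have hLd : L ≤ (δ:ℝ) := by
    have := Real.log_le_sub_one_of_pos hpos
    rw [← hLdef] at this
    linarith
  have hp0 : 0 ≤ p := div_nonneg hL0 hpos.le
  have hp1 : p ≤ 1 := by
    rw [hpdef, div_le_one hpos]; linarith
  have hmain := tsr_prob_bound G hδh hp0 hp1
  have hpδ : ((δ:ℝ) + 1) * p = L := by
    rw [hpdef]; field_simp
  have hexp : (1 - p) ^ (δ + 1) ≤ 1 / ((δ:ℝ) + 1) := by
    have h1 : (1 - p) ≤ Real.exp (-p) := by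
      have := Real.add_one_le_exp (-p); linarith
    have h2 : (1-p)^(δ+1) ≤ (Real.exp (-p))^(δ+1) :=
      pow_le_pow_left₀ (by linarith) h1 _
    have h3 : (Real.exp (-p))^(δ+1) = Real.exp (-L) := by
      rw [← Real.exp_nat_mul]
      congr 1
      push_cast
      linarith [hpδ]
    have h4 : Real.exp (-L) = 1 / ((δ:ℝ) + 1) := by
      rw [Real.exp_neg, hLdef, Real.exp_log hpos]
      rw [inv_eq_one_div]
    rw [h3, h4] at h2
    exact h2
  have hν : 2 * (hopMatchingNum G : ℝ) ≤ (n:ℝ) := by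
    have := two_hopMatchingNum_le G
    exact_mod_cast this
  have hn0 : (0:ℝ) ≤ (n:ℝ) := Nat.cast_nonneg n
  have step : (tsrDomNum G : ℝ) ≤ 2 * n * p + 2 * n * (1 / ((δ:ℝ)+1)) := by
    refine hmain.trans ?_
    have := mul_le_mul_of_nonneg_left hexp (by positivity : (0:ℝ) ≤ 2 * n)
    linarith
  have key : 2 * (n:ℝ) * p + 2 * n * (1 / ((δ:ℝ)+1))
      = (2 * L + δ + 3) / ((δ:ℝ) + 1) * n - n := by
    rw [hpdef]
    field_simp
    ring
  rw [key] at step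
  linarith
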